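/- In the average-rule ADHT, at any time t+1 at which case one holds for a good agent i ∈ G and a hypothesis θ ∈ Θ (so that the pairwise disjoint sets ℒ^θ_i, ℋ^θ_i, ℳ^θ_i partitioning the collected set 𝒩^θ_i are defined), the following holds: for every agent j ∈ ℳ^θ_i and every hypothesis θ' ≠ θ, there exist a good agent j' ∈ 𝒩^θ_i with stored value b^a_{j'}(θ) ≤ b^a_j(θ) and a good agent j'' ∈ 𝒩^θ_i ∩ S(θ,θ') with b^a_j(θ) ≤ b^a_{j''}(θ). -/

import Mathlib

/-- **Sandwich lemma for the average-rule ADHT (Lemma 4).** At any time at which case one holds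
for a good agent `i ∈ G` and a hypothesis `θ` (with collected agent set `C = 𝒩^θ_i` of which at
most `f` members are bad, stored values `v j = b^a_j(θ)`, and the pairwise disjoint sets
`L = ℒ^θ_i`, `H = ℋ^θ_i`, `M = C \ (L ∪ H) = ℳ^θ_i` partitioning `C`), for every agent `j ∈ M`
and every hypothesis `θ' ≠ θ`, there exist a good agent `j' ∈ C` with stored value `v j' ≤ v j`
and a good agent `j'' ∈ C ∩ S(θ,θ')` with `v j ≤ v j''`. -/

lemma exists_good_aux {𝒩 : Type*} (G : Finset 𝒩) (f : ℕ) (C : Finset 𝒩)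
    (hbad : ((C : Set 𝒩) \ (G : Set 𝒩)).ncard ≤ f)
    (A : Set 𝒩) (hA : A ⊆ (C : Set 𝒩)) (hcard : f + 1 ≤ A.ncard) :
    ∃ x ∈ A, x ∈ G := by
  by_contra h
  push_neg at h
  have hsub : A ⊆ (C : Set 𝒩) \ (G : Set 𝒩) := fun x hx => ⟨hA hx, h x hx⟩
  have hfin : ((C : Set 𝒩) \ (G : Set 𝒩)).Finite := C.finite_toSet.diff
  have := Set.ncard_le_ncard hsub hfin
  omega

theorem avg_adht_sandwich {𝒩 : Type*} [Fintype 𝒩] [DecidableEq 𝒩]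
    (G : Finset 𝒩) (f : ℕ)
    {Θ : Type*} [Fintype Θ] [Nonempty Θ]
    (Spair : Θ → Θ → Set 𝒩) (θ : Θ)
    (i : 𝒩) (hi : i ∈ G)
    (C : Finset 𝒩)
    (hbad : ((C : Set 𝒩) \ (G : Set 𝒩)).ncard ≤ f)
    (v : 𝒩 → ℝ) (hv : ∀ j, v j ∈ Set.Icc (0 : ℝ) 1)
    (hcase1 : ∀ θ' ≠ θ, 2 * f + 2 ≤ ((C : Set 𝒩) ∩ Spair θ θ').ncard)
    (L : Finset 𝒩) (hL_sub : L ⊆ C) (hL_card : L.card = f)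
    (hL_low : ∀ l ∈ L, ∀ j ∈ C \ L, v l ≤ v j)
    (H : Finset 𝒩) (hH_sub : H ⊆ C \ L)
    (hH_high : ∀ h ∈ H, ∀ j ∈ C \ (L ∪ H), v j ≤ v h)
    (hH_cover : ∀ θ' ≠ θ, f + 1 ≤ ((H : Set 𝒩) ∩ Spair θ θ').ncard)
    (hH_min : ∀ H' ⊆ C \ L,
      ((∀ h ∈ H', ∀ j ∈ C \ (L ∪ H'), v j ≤ v h) ∧
        (∀ θ' ≠ θ, f + 1 ≤ ((H' : Set 𝒩) ∩ Spair θ θ').ncard)) →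
      H.card ≤ H'.card) :
    ∀ j ∈ C \ (L ∪ H), ∀ θ' ≠ θ,
      (∃ j' ∈ C, j' ∈ G ∧ v j' ≤ v j) ∧
      (∃ j'' ∈ C, j'' ∈ G ∧ j'' ∈ Spair θ θ' ∧ v j ≤ v j'') := by
  intro j hj θ' hθ'
  rw [Finset.mem_sdiff, Finset.mem_union] at hj
  obtain ⟨hjC, hjLH⟩ := hj
  push_neg at hjLH
  constructor
  · have hsub : ((insert j L : Finset 𝒩) : Set 𝒩) ⊆ (C : Set 𝒩) := by
      intro x hx
      simp only [Finset.coe_insert, Set.mem_insert_iff] at hx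
      rcases hx with rfl | hx
      · exact hjC
      · exact hL_sub hx
    have hcard : f + 1 ≤ ((insert j L : Finset 𝒩) : Set 𝒩).ncard := by
      rw [Set.ncard_coe_finset, Finset.card_insert_of_notMem hjLH.1, hL_card]
    obtain ⟨x, hx, hxG⟩ := exists_good_aux G f C hbad _ hsub hcard
    simp only [Finset.coe_insert, Set.mem_insert_iff, Finset.mem_coe] at hx
    rcases hx with rfl | hx
    · exact ⟨x, hjC, hxG, le_refl _⟩
    · exact ⟨x, hL_sub hx, hxG, hL_low x hx j (Finset.mem_sdiff.mpr ⟨hjC, hjLH.1⟩)⟩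
  · have hsub : (H : Set 𝒩) ∩ Spair θ θ' ⊆ (C : Set 𝒩) := by
      intro x hx
      have := hH_sub hx.1
      exact (Finset.mem_sdiff.mp this).1
    obtain ⟨x, hx, hxG⟩ := exists_good_aux G f C hbad _ hsub (hH_cover θ' hθ')
    refine ⟨x, (Finset.mem_sdiff.mp (hH_sub hx.1)).1, hxG, hx.2, ?_⟩
    exact hH_high x hx.1 j (by simp [Finset.mem_sdiff, hjC, hjLH.1, hjLH.2])
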